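/- Let B be a real symmetric positive definite 3×3 matrix with det B = 1. Then ℂ(B):B = (3/2)·A(B). -/

import Mathlib

open Matrix MeasureTheory

noncomputable section

/-- 3×3 real matrices. -/
abbrev Mat3 := Matrix (Fin 3) (Fin 3) ℝ

/-- Rank-4 tensors on ℝ³. -/
abbrev Tens4 := Fin 3 → Fin 3 → Fin 3 → Fin 3 → ℝ

/-- Tensor (outer) product of two matrices: `(K ⊗ L)_{ijkl} = K_{ij} L_{kl}`. -/
def otimes (K L : Mat3) : Tens4 := fun i j k l => K i j * L k l

/-- Symmetrization of a rank-4 tensor: the average over all 24 permutations of the indices. -/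
def symmetrize (T : Tens4) : Tens4 := fun i j k l =>
  (∑ σ : Equiv.Perm (Fin 4),
      T (![i, j, k, l] (σ 0)) (![i, j, k, l] (σ 1)) (![i, j, k, l] (σ 2)) (![i, j, k, l] (σ 3)))
    / 24

/-- Contraction of a rank-4 tensor with a matrix: `(𝔹:M)_{ij} = Σ_{k,l} 𝔹_{ijkl} M_{kl}`. -/
def contr (T : Tens4) (M : Mat3) : Mat3 :=
  Matrix.of fun i j => ∑ k, ∑ l, T i j k l * M k l

/-- Full contraction `N:𝔹:M = Σ_{i,j,k,l} N_{ij} 𝔹_{ijkl} M_{kl}`. -/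
def dcontr (N : Mat3) (T : Tens4) (M : Mat3) : ℝ :=
  ∑ i, ∑ j, ∑ k, ∑ l, N i j * T i j k l * M k l

/-- The matrix `(B + s·I)⁻¹` (matrix inverse). -/
def res (B : Mat3) (s : ℝ) : Mat3 := (B + s • (1 : Mat3))⁻¹

/-- `A(B) = (1/2)·∫₀^∞ (B + s·I)⁻¹ / √(det(B + s·I)) ds`, entrywise. -/
def Amat (B : Mat3) : Mat3 :=
  Matrix.of fun i j =>
    (1 / 2) * ∫ s in Set.Ioi (0 : ℝ),
      res B s i j / Real.sqrt (B + s • (1 : Mat3)).det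

/-- `𝔸(B) = (3/4)·∫₀^∞ s·S((B+sI)⁻¹ ⊗ (B+sI)⁻¹) / √(det(B+sI)) ds`, entrywise. -/
def Atens (B : Mat3) : Tens4 := fun i j k l =>
  (3 / 4) * ∫ s in Set.Ioi (0 : ℝ),
    s * symmetrize (otimes (res B s) (res B s)) i j k l
      / Real.sqrt (B + s • (1 : Mat3)).det

/-- `ℂ(B) = (3/4)·∫₀^∞ S((B+sI)⁻¹ ⊗ (B+sI)⁻¹) / √(det(B+sI)) ds`, entrywise. -/
def Ctens (B : Mat3) : Tens4 := fun i j k l =>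
  (3 / 4) * ∫ s in Set.Ioi (0 : ℝ),
    symmetrize (otimes (res B s) (res B s)) i j k l
      / Real.sqrt (B + s • (1 : Mat3)).det

end

namespace CtensAux

open Equiv Filter Set Real

/-! ### Enumeration of permutations of four letters -/

lemma perm_sum_eq (G : Fin 4 → Fin 4 → Fin 4 → Fin 4 → ℝ) :
    ∑ σ : Perm (Fin 4), G (σ 0) (σ 1) (σ 2) (σ 3) =
      G 0 1 2 3 + G 0 1 3 2 + G 0 2 1 3 + G 0 2 3 1 + G 0 3 1 2 + G 0 3 2 1 +
      G 1 0 2 3 + G 1 0 3 2 + G 1 2 0 3 + G 1 2 3 0 + G 1 3 0 2 + G 1 3 2 0 +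
      G 2 0 1 3 + G 2 0 3 1 + G 2 1 0 3 + G 2 1 3 0 + G 2 3 0 1 + G 2 3 1 0 +
      G 3 0 1 2 + G 3 0 2 1 + G 3 1 0 2 + G 3 1 2 0 + G 3 2 0 1 + G 3 2 1 0 := by
  have h : (Finset.univ.val.map
        (fun σ : Perm (Fin 4) => ((σ 0, σ 1, σ 2, σ 3) : Fin 4 × Fin 4 × Fin 4 × Fin 4)))
      = ↑[((0:Fin 4),(1:Fin 4),(2:Fin 4),(3:Fin 4)),(0,1,3,2),(0,2,1,3),(0,2,3,1),(0,3,1,2),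
      (0,3,2,1),
      (1,0,2,3),(1,0,3,2),(1,2,0,3),(1,2,3,0),(1,3,0,2),(1,3,2,0),
      (2,0,1,3),(2,0,3,1),(2,1,0,3),(2,1,3,0),(2,3,0,1),(2,3,1,0),
      (3,0,1,2),(3,0,2,1),(3,1,0,2),(3,1,2,0),(3,2,0,1),(3,2,1,0)] := by decide
  have h2 : ∑ σ : Perm (Fin 4), G (σ 0) (σ 1) (σ 2) (σ 3)
      = ((Finset.univ.val.map
          (fun σ : Perm (Fin 4) => ((σ 0, σ 1, σ 2, σ 3) : Fin 4 × Fin 4 × Fin 4 × Fin 4))).map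
          (fun p => G p.1 p.2.1 p.2.2.1 p.2.2.2)).sum := by
    rw [Multiset.map_map]; rfl
  rw [h2, h]
  simp [Multiset.sum_cons]
  ring

lemma symmetrize_otimes (R : Mat3) (hR : ∀ a b, R a b = R b a) (i j k l : Fin 3) :
    symmetrize (otimes R R) i j k l = (R i j * R k l + R i k * R j l + R i l * R j k) / 3 := by
  have key := perm_sum_eq (fun a b c d =>
    R (![i,j,k,l] a) (![i,j,k,l] b) * R (![i,j,k,l] c) (![i,j,k,l] d))
  have h0 : symmetrize (otimes R R) i j k l =
      (∑ σ : Perm (Fin 4),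
        R (![i,j,k,l] (σ 0)) (![i,j,k,l] (σ 1)) * R (![i,j,k,l] (σ 2)) (![i,j,k,l] (σ 3))) / 24 :=
    rfl
  rw [h0, key]
  simp only [Matrix.cons_val_zero, Matrix.cons_val_one, Matrix.head_cons,
    Matrix.cons_val_two, Matrix.cons_val_three, Matrix.tail_cons, Matrix.head_fin_const]
  rw [hR j i, hR k i, hR l i, hR k j, hR l j, hR l k]
  ring

/-! ### Scalar integrals -/

/-- The basic integrand `1/((p+s)·√((q₀+s)(q₁+s)(q₂+s)))`. -/
noncomputable def baseF (p q0 q1 q2 : ℝ) (s : ℝ) : ℝ :=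
  (p + s)⁻¹ / Real.sqrt ((q0 + s) * (q1 + s) * (q2 + s))

/-- The integrand appearing in the contraction `ℂ(B):B`. -/
noncomputable def psiF (p q0 q1 q2 : ℝ) (s : ℝ) : ℝ :=
  (1/3) * (5 * (p+s)⁻¹ - s * ((q0+s)⁻¹ + (q1+s)⁻¹ + (q2+s)⁻¹) * (p+s)⁻¹
      - 2 * s * ((p+s)⁻¹)^2) / Real.sqrt ((q0 + s) * (q1 + s) * (q2 + s))

lemma integrableOn_of_bound (f : ℝ → ℝ) (hc : ContinuousOn f (Set.Ici 0)) (C : ℝ)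
    (hb : ∀ s : ℝ, 1 ≤ s → |f s| ≤ C * s ^ (-(5/2) : ℝ)) :
    IntegrableOn f (Set.Ioi (0:ℝ)) := by
  have h1 : IntegrableOn f (Set.Ioc (0:ℝ) 1) :=
    ((hc.mono (Set.Icc_subset_Ici_self)).integrableOn_Icc).mono_set Set.Ioc_subset_Icc_self
  have h2 : IntegrableOn f (Set.Ioi (1:ℝ)) := by
    have hi : IntegrableOn (fun s : ℝ => C * s ^ (-(5/2):ℝ)) (Set.Ioi 1) :=
      (integrableOn_Ioi_rpow_of_lt (by norm_num) one_pos).const_mul C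
    apply Integrable.mono' hi
      ((hc.mono (Set.Ioi_subset_Ici zero_le_one)).aestronglyMeasurable
        measurableSet_Ioi)
    filter_upwards [ae_restrict_mem measurableSet_Ioi] with s hs
    rw [Real.norm_eq_abs]
    exact hb s (le_of_lt hs)
  have h3 := h1.union h2
  rwa [Set.Ioc_union_Ioi_eq_Ioi (by norm_num : (0:ℝ) ≤ 1)] at h3

lemma contin_inv {p : ℝ} (hp : 0 < p) : ContinuousOn (fun s : ℝ => (p + s)⁻¹) (Set.Ici 0) := by
  apply ContinuousOn.inv₀ (by fun_prop)
  intro s hs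
  have hs' : (0:ℝ) ≤ s := hs
  positivity

lemma contin_sqrtD {q0 q1 q2 : ℝ} (hq0 : 0 < q0) (hq1 : 0 < q1) (hq2 : 0 < q2) :
    ContinuousOn (fun s : ℝ => (Real.sqrt ((q0+s) * (q1+s) * (q2+s)))⁻¹) (Set.Ici 0) := by
  apply ContinuousOn.inv₀ (Continuous.continuousOn (by fun_prop))
  intro s hs
  have hs' : (0:ℝ) ≤ s := hs
  have h : 0 < (q0+s) * (q1+s) * (q2+s) := by positivity
  exact (Real.sqrt_pos.2 h).ne'

lemma sqrt_ge {q0 q1 q2 s : ℝ} (hq0 : 0 < q0) (hq1 : 0 < q1) (hq2 : 0 < q2) (hs : 1 ≤ s) :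
    s ^ ((3:ℝ)/2) ≤ Real.sqrt ((q0+s) * (q1+s) * (q2+s)) := by
  have hs0 : (0:ℝ) < s := lt_of_lt_of_le one_pos hs
  have h1 : s^(3:ℕ) ≤ (q0+s) * (q1+s) * (q2+s) := by
    have e0 : s ≤ q0 + s := by linarith
    have e1 : s ≤ q1 + s := by linarith
    have e2 : s ≤ q2 + s := by linarith
    calc s^(3:ℕ) = s * s * s := by ring
      _ ≤ (q0+s) * (q1+s) * (q2+s) :=
          mul_le_mul (mul_le_mul e0 e1 hs0.le (by linarith)) e2 hs0.le (by positivity)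
  have h2 : Real.sqrt (s^(3:ℕ)) ≤ Real.sqrt ((q0+s) * (q1+s) * (q2+s)) := Real.sqrt_le_sqrt h1
  refine le_trans (le_of_eq ?_) h2
  rw [Real.sqrt_eq_rpow, ← Real.rpow_natCast s 3, ← Real.rpow_mul hs0.le]
  norm_num

lemma rpow_split {s : ℝ} (hs : 1 ≤ s) :
    s ^ (-(5/2) : ℝ) = s⁻¹ * (s ^ ((3:ℝ)/2))⁻¹ := by
  have hs0 : (0:ℝ) < s := lt_of_lt_of_le one_pos hs
  rw [← Real.rpow_neg_one, ← Real.rpow_neg hs0.le, ← Real.rpow_add hs0]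
  norm_num

lemma baseF_integrable {p q0 q1 q2 : ℝ} (hp : 0 < p) (hq0 : 0 < q0) (hq1 : 0 < q1)
    (hq2 : 0 < q2) : IntegrableOn (baseF p q0 q1 q2) (Set.Ioi (0:ℝ)) := by
  apply integrableOn_of_bound _ ?_ 1
  · intro s hs
    have hs0 : (0:ℝ) < s := lt_of_lt_of_le one_pos hs
    have hsub : s ^ ((3:ℝ)/2) ≤ Real.sqrt ((q0+s) * (q1+s) * (q2+s)) := sqrt_ge hq0 hq1 hq2 hs
    have hsp : (0:ℝ) < s ^ ((3:ℝ)/2) := Real.rpow_pos_of_pos hs0 _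
    have hs2 : (p+s)⁻¹ ≤ s⁻¹ := by
      rw [← one_div, ← one_div]
      apply one_div_le_one_div_of_le hs0
      linarith
    have h0 : (0:ℝ) ≤ (p+s)⁻¹ := by positivity
    rw [rpow_split hs, one_mul, baseF, abs_div, abs_of_nonneg h0,
      abs_of_pos (lt_of_lt_of_le hsp hsub), div_eq_mul_inv]
    apply mul_le_mul hs2 _ (by positivity) (by positivity)
    exact inv_anti₀ hsp hsub
  · unfold baseF
    simp only [div_eq_mul_inv]
    exact (contin_inv hp).mul (contin_sqrtD hq0 hq1 hq2)

lemma psiF_integrable {p q0 q1 q2 : ℝ} (hp : 0 < p) (hq0 : 0 < q0) (hq1 : 0 < q1)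
    (hq2 : 0 < q2) : IntegrableOn (psiF p q0 q1 q2) (Set.Ioi (0:ℝ)) := by
  apply integrableOn_of_bound _ ?_ (10/3)
  · intro s hs
    have hs0 : (0:ℝ) < s := lt_of_lt_of_le one_pos hs
    have hsi : (0:ℝ) ≤ s⁻¹ := by positivity
    have key : ∀ μ T : ℝ, 0 ≤ μ → μ ≤ s⁻¹ → 0 ≤ T → T ≤ 3 * s⁻¹ →
        |5 * μ - s * T * μ - 2 * s * μ^2| ≤ 10 * s⁻¹ := by
      intro μ T hμ0 hμ hT0 hT
      have hsμ : s * μ ≤ 1 := by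
        have := mul_le_mul_of_nonneg_left hμ hs0.le
        rwa [mul_inv_cancel₀ hs0.ne'] at this
      have hb1 : s * T * μ ≤ 3 * s⁻¹ := by
        calc s * T * μ = T * (s * μ) := by ring
          _ ≤ T * 1 := mul_le_mul_of_nonneg_left hsμ hT0
          _ = T := mul_one T
          _ ≤ 3 * s⁻¹ := hT
      have hb1' : 0 ≤ s * T * μ := by positivity
      have hb2 : 2 * s * μ^2 ≤ 2 * s⁻¹ := by
        calc 2 * s * μ^2 = 2 * ((s * μ) * μ) := by ring
          _ ≤ 2 * (1 * μ) := by
              apply mul_le_mul_of_nonneg_left (mul_le_mul_of_nonneg_right hsμ hμ0) (by norm_num)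
          _ = 2 * μ := by ring
          _ ≤ 2 * s⁻¹ := by linarith
      have hb2' : 0 ≤ 2 * s * μ^2 := by positivity
      rw [abs_le]
      refine ⟨by linarith, by linarith⟩
    have hμ0 : (0:ℝ) ≤ (p+s)⁻¹ := by positivity
    have hμ : (p+s)⁻¹ ≤ s⁻¹ := by
      rw [← one_div, ← one_div]
      exact one_div_le_one_div_of_le hs0 (by linarith)
    have hT0 : (0:ℝ) ≤ (q0+s)⁻¹ + (q1+s)⁻¹ + (q2+s)⁻¹ := by positivity
    have hT : (q0+s)⁻¹ + (q1+s)⁻¹ + (q2+s)⁻¹ ≤ 3 * s⁻¹ := by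
      have e0 : (q0+s)⁻¹ ≤ s⁻¹ := by
        rw [← one_div, ← one_div]; exact one_div_le_one_div_of_le hs0 (by linarith)
      have e1 : (q1+s)⁻¹ ≤ s⁻¹ := by
        rw [← one_div, ← one_div]; exact one_div_le_one_div_of_le hs0 (by linarith)
      have e2 : (q2+s)⁻¹ ≤ s⁻¹ := by
        rw [← one_div, ← one_div]; exact one_div_le_one_div_of_le hs0 (by linarith)
      linarith
    have hX := key _ _ hμ0 hμ hT0 hT
    have hsub : s ^ ((3:ℝ)/2) ≤ Real.sqrt ((q0+s) * (q1+s) * (q2+s)) := sqrt_ge hq0 hq1 hq2 hs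
    have hsp : (0:ℝ) < s ^ ((3:ℝ)/2) := Real.rpow_pos_of_pos hs0 _
    have hupos : (0:ℝ) < Real.sqrt ((q0+s) * (q1+s) * (q2+s)) := lt_of_lt_of_le hsp hsub
    rw [psiF, abs_div, abs_mul, abs_of_pos hupos]
    have habs : |(1:ℝ)/3| = 1/3 := by norm_num
    rw [habs]
    have step1 : (1/3) * |5 * (p+s)⁻¹ - s * ((q0+s)⁻¹ + (q1+s)⁻¹ + (q2+s)⁻¹) * (p+s)⁻¹
          - 2 * s * ((p+s)⁻¹)^2| / Real.sqrt ((q0+s) * (q1+s) * (q2+s))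
        ≤ (1/3) * (10 * s⁻¹) / s ^ ((3:ℝ)/2) := by
      apply div_le_div₀ (by positivity) ?_ hsp hsub
      exact mul_le_mul_of_nonneg_left hX (by norm_num)
    refine le_trans step1 (le_of_eq ?_)
    rw [rpow_split hs, div_eq_mul_inv]
    ring
  · have c1 := contin_inv hp
    have c0 := contin_inv hq0
    have c2 := contin_inv hq1
    have c3 := contin_inv hq2
    have cs := contin_sqrtD hq0 hq1 hq2
    unfold psiF
    simp only [div_eq_mul_inv]
    exact (continuousOn_const.mul (((continuousOn_const.mul c1).sub
      ((continuousOn_id.mul ((c0.add c2).add c3)).mul c1)).sub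
      ((continuousOn_const.mul continuousOn_id).mul (c1.pow 2)))).mul cs

lemma g_hasDerivAt {p q0 q1 q2 : ℝ} (hp : 0 < p) (hq0 : 0 < q0) (hq1 : 0 < q1)
    (hq2 : 0 < q2) {x : ℝ} (hx : 0 ≤ x) :
    HasDerivAt (fun s : ℝ => (2/3) * s * (p+s)⁻¹ *
        (Real.sqrt ((q0+s) * (q1+s) * (q2+s)))⁻¹)
      (psiF p q0 q1 q2 x - baseF p q0 q1 q2 x) x := by
  have hpx : (0:ℝ) < p + x := by linarith
  have h0x : (0:ℝ) < q0 + x := by linarith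
  have h1x : (0:ℝ) < q1 + x := by linarith
  have h2x : (0:ℝ) < q2 + x := by linarith
  have hDx : (0:ℝ) < (q0+x) * (q1+x) * (q2+x) := by positivity
  have hux : (0:ℝ) < Real.sqrt ((q0+x) * (q1+x) * (q2+x)) := Real.sqrt_pos.2 hDx
  have hA : HasDerivAt (fun s : ℝ => q0 + s) 1 x := by
    simpa using (hasDerivAt_id x).const_add q0
  have hB : HasDerivAt (fun s : ℝ => q1 + s) 1 x := by
    simpa using (hasDerivAt_id x).const_add q1
  have hC : HasDerivAt (fun s : ℝ => q2 + s) 1 x := by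
    simpa using (hasDerivAt_id x).const_add q2
  have hD : HasDerivAt (fun s : ℝ => (q0+s) * (q1+s) * (q2+s))
      ((1 * (q1+x) + (q0+x) * 1) * (q2+x) + (q0+x) * (q1+x) * 1) x := (hA.mul hB).mul hC
  have hsq := hD.sqrt hDx.ne'
  have hsqi := hsq.inv hux.ne'
  have hmu : HasDerivAt (fun s : ℝ => (p+s)⁻¹) (-1 / (p+x)^2) x :=
    ((hasDerivAt_id x).const_add p).inv hpx.ne'
  have hlin : HasDerivAt (fun s : ℝ => (2/3 : ℝ) * s) (2/3) x := by
    simpa using (hasDerivAt_id x).const_mul (2/3 : ℝ)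
  have hg := (hlin.mul hmu).mul hsqi
  convert hg using 1
  · rfl
  · rfl
  · rfl
  simp only [Pi.mul_apply, Pi.inv_apply]
  rw [Real.sq_sqrt hDx.le]
  unfold psiF baseF
  field_simp
  ring

lemma g_tendsto {p q0 q1 q2 : ℝ} (hp : 0 < p) (hq0 : 0 < q0) (hq1 : 0 < q1) (hq2 : 0 < q2) :
    Tendsto (fun s : ℝ => (2/3) * s * (p+s)⁻¹ *
      (Real.sqrt ((q0+s) * (q1+s) * (q2+s)))⁻¹) atTop (nhds 0) := by
  have hD : Tendsto (fun s : ℝ => (q0+s) * (q1+s) * (q2+s)) atTop atTop := by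
    apply Filter.Tendsto.atTop_mul_atTop₀
    apply Filter.Tendsto.atTop_mul_atTop₀
    · exact tendsto_atTop_add_const_left _ q0 tendsto_id
    · exact tendsto_atTop_add_const_left _ q1 tendsto_id
    · exact tendsto_atTop_add_const_left _ q2 tendsto_id
  have hinv : Tendsto (fun s : ℝ => (Real.sqrt ((q0+s) * (q1+s) * (q2+s)))⁻¹)
      atTop (nhds 0) := by
    have h1 : Tendsto (fun s : ℝ => ((q0+s) * (q1+s) * (q2+s))⁻¹) atTop (nhds 0) :=
      hD.inv_tendsto_atTop
    have h2 := (Real.continuous_sqrt.tendsto 0).comp h1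
    rw [Real.sqrt_zero] at h2
    refine h2.congr (fun s => ?_)
    show Real.sqrt (((q0+s) * (q1+s) * (q2+s))⁻¹) = _
    rw [Real.sqrt_inv]
  have hb : Tendsto (fun s : ℝ => (2/3 : ℝ) *
      (Real.sqrt ((q0+s) * (q1+s) * (q2+s)))⁻¹) atTop (nhds 0) := by
    have := hinv.const_mul (2/3 : ℝ)
    simpa using this
  apply squeeze_zero_norm' _ hb
  filter_upwards [eventually_ge_atTop (0:ℝ)] with s hs
  have hps : (0:ℝ) < p + s := by linarith
  have hss : s * (p+s)⁻¹ ≤ 1 := by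
    rw [← div_eq_mul_inv]
    exact (div_le_one hps).2 (by linarith)
  have h0 : (0:ℝ) ≤ (Real.sqrt ((q0+s) * (q1+s) * (q2+s)))⁻¹ := by positivity
  rw [Real.norm_eq_abs, abs_of_nonneg (by positivity)]
  calc (2/3) * s * (p+s)⁻¹ * (Real.sqrt ((q0+s) * (q1+s) * (q2+s)))⁻¹
      = ((2/3) * (Real.sqrt ((q0+s) * (q1+s) * (q2+s)))⁻¹) * (s * (p+s)⁻¹) := by ring
    _ ≤ ((2/3) * (Real.sqrt ((q0+s) * (q1+s) * (q2+s)))⁻¹) * 1 := by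
        apply mul_le_mul_of_nonneg_left hss (by positivity)
    _ = (2/3) * (Real.sqrt ((q0+s) * (q1+s) * (q2+s)))⁻¹ := by ring

lemma scalar_key {p q0 q1 q2 : ℝ} (hp : 0 < p) (hq0 : 0 < q0) (hq1 : 0 < q1) (hq2 : 0 < q2) :
    ∫ s in Set.Ioi (0:ℝ), psiF p q0 q1 q2 s = ∫ s in Set.Ioi (0:ℝ), baseF p q0 q1 q2 s := by
  have hψ := psiF_integrable hp hq0 hq1 hq2
  have hβ := baseF_integrable hp hq0 hq1 hq2
  have hder : ∀ x ∈ Set.Ioi (0:ℝ), HasDerivAt (fun s : ℝ => (2/3) * s * (p+s)⁻¹ *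
        (Real.sqrt ((q0+s) * (q1+s) * (q2+s)))⁻¹)
      (psiF p q0 q1 q2 x - baseF p q0 q1 q2 x) x :=
    fun x hx => g_hasDerivAt hp hq0 hq1 hq2 (le_of_lt hx)
  have hzero := integral_Ioi_of_hasDerivAt_of_tendsto
    (((g_hasDerivAt hp hq0 hq1 hq2 le_rfl).continuousAt).continuousWithinAt) hder (hψ.sub hβ)
    (g_tendsto hp hq0 hq1 hq2)
  rw [integral_sub hψ hβ] at hzero
  norm_num at hzero
  linarith [hzero]

/-! ### Spectral decomposition of a positive definite 3×3 matrix -/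

section MatrixPart

/-- The eigenvalues of `B`. -/
noncomputable def lam {B : Mat3} (hB : B.PosDef) : Fin 3 → ℝ := hB.1.eigenvalues

/-- The orthogonal matrix of eigenvectors of `B`. -/
noncomputable def U {B : Mat3} (hB : B.PosDef) : Mat3 := hB.1.eigenvectorUnitary

lemma lam_pos {B : Mat3} (hB : B.PosDef) : ∀ a, 0 < lam hB a := fun a => hB.eigenvalues_pos a

lemma U_star_mul {B : Mat3} (hB : B.PosDef) : star (U hB) * U hB = 1 :=
  hB.1.eigenvectorUnitary.2.1

lemma U_mul_star {B : Mat3} (hB : B.PosDef) : U hB * star (U hB) = 1 :=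
  hB.1.eigenvectorUnitary.2.2

lemma spec {B : Mat3} (hB : B.PosDef) :
    B = U hB * Matrix.diagonal (lam hB) * star (U hB) := by
  have h := hB.1.spectral_theorem
  rwa [RCLike.ofReal_real_eq_id, Function.id_comp] at h

lemma entry {B : Mat3} (hB : B.PosDef) (v : Fin 3 → ℝ) (i j : Fin 3) :
    (U hB * Matrix.diagonal v * star (U hB)) i j = ∑ a, U hB i a * v a * U hB j a := by
  simp only [Matrix.mul_apply, Matrix.diagonal_apply, Matrix.star_apply, star_trivial,
    mul_ite, ite_mul, mul_zero, zero_mul, Finset.sum_ite_eq, Finset.sum_ite_eq', Finset.mem_univ, if_true]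

lemma Bsymm {B : Mat3} (hB : B.PosDef) : ∀ k l, B k l = B l k := by
  intro k l
  have h := hB.1
  conv_lhs => rw [← h]
  simp [Matrix.conjTranspose_apply]

lemma conj_mul {B : Mat3} (hB : B.PosDef) (f g : Fin 3 → ℝ) :
    (U hB * Matrix.diagonal f * star (U hB)) * (U hB * Matrix.diagonal g * star (U hB))
      = U hB * Matrix.diagonal (fun a => f a * g a) * star (U hB) := by
  have key : star (U hB) * (U hB * Matrix.diagonal g * star (U hB))
      = Matrix.diagonal g * star (U hB) := by
    rw [← Matrix.mul_assoc, ← Matrix.mul_assoc, U_star_mul hB, Matrix.one_mul]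
  calc (U hB * Matrix.diagonal f * star (U hB)) * (U hB * Matrix.diagonal g * star (U hB))
      = U hB * Matrix.diagonal f * (star (U hB) * (U hB * Matrix.diagonal g * star (U hB))) := by
        rw [Matrix.mul_assoc]
    _ = U hB * Matrix.diagonal f * (Matrix.diagonal g * star (U hB)) := by rw [key]
    _ = U hB * (Matrix.diagonal f * Matrix.diagonal g) * star (U hB) := by
        rw [Matrix.mul_assoc, Matrix.mul_assoc, Matrix.mul_assoc]
    _ = U hB * Matrix.diagonal (fun a => f a * g a) * star (U hB) := by
        rw [Matrix.diagonal_mul_diagonal]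

lemma BsI {B : Mat3} (hB : B.PosDef) (s : ℝ) : B + s • (1 : Mat3)
    = U hB * Matrix.diagonal (fun a => lam hB a + s) * star (U hB) := by
  have h1 : Matrix.diagonal (fun a => lam hB a + s)
      = Matrix.diagonal (lam hB) + s • (1 : Mat3) := by
    rw [Matrix.smul_one_eq_diagonal, ← Matrix.diagonal_add]
  rw [h1, Matrix.mul_add, Matrix.add_mul, ← spec hB, Matrix.mul_smul, Matrix.smul_mul,
    Matrix.mul_one, U_mul_star hB]

lemma detBsI {B : Mat3} (hB : B.PosDef) (s : ℝ) : (B + s • (1 : Mat3)).det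
    = (lam hB 0 + s) * (lam hB 1 + s) * (lam hB 2 + s) := by
  rw [BsI hB s, Matrix.det_mul, Matrix.det_mul]
  have hdet : (U hB).det * (star (U hB)).det = 1 := by
    rw [← Matrix.det_mul, U_mul_star hB, Matrix.det_one]
  calc (U hB).det * (Matrix.diagonal (fun a => lam hB a + s)).det * (star (U hB)).det
      = (U hB).det * (star (U hB)).det * (Matrix.diagonal (fun a => lam hB a + s)).det := by ring
    _ = (Matrix.diagonal (fun a => lam hB a + s)).det := by rw [hdet, one_mul]
    _ = (lam hB 0 + s) * (lam hB 1 + s) * (lam hB 2 + s) := by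
        rw [Matrix.det_diagonal, Fin.prod_univ_three]

lemma resBsI {B : Mat3} (hB : B.PosDef) (s : ℝ) (hs : 0 ≤ s) :
    res B s = U hB * Matrix.diagonal (fun a => (lam hB a + s)⁻¹) * star (U hB) := by
  show (B + s • (1 : Mat3))⁻¹ = _
  apply Matrix.inv_eq_right_inv
  rw [BsI hB s, conj_mul hB]
  have h1 : (fun a => (lam hB a + s) * (lam hB a + s)⁻¹) = fun _ : Fin 3 => (1:ℝ) := by
    funext a
    exact mul_inv_cancel₀ (by have := lam_pos hB a; linarith)
  rw [h1, Matrix.diagonal_one, Matrix.mul_one, U_mul_star hB]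

lemma res_apply {B : Mat3} (hB : B.PosDef) (s : ℝ) (hs : 0 ≤ s) (i j : Fin 3) :
    res B s i j = ∑ a, U hB i a * (lam hB a + s)⁻¹ * U hB j a := by
  rw [resBsI hB s hs, entry hB]

lemma res_symm {B : Mat3} (hB : B.PosDef) (s : ℝ) (hs : 0 ≤ s) :
    ∀ k l, res B s k l = res B s l k := by
  intro k l
  rw [res_apply hB s hs, res_apply hB s hs]
  exact Finset.sum_congr rfl fun a _ => by ring

lemma resB {B : Mat3} (hB : B.PosDef) (s : ℝ) (hs : 0 ≤ s) :
    res B s * B = U hB * Matrix.diagonal (fun a => (lam hB a + s)⁻¹ * lam hB a)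
      * star (U hB) := by
  calc res B s * B
      = (U hB * Matrix.diagonal (fun a => (lam hB a + s)⁻¹) * star (U hB))
        * (U hB * Matrix.diagonal (lam hB) * star (U hB)) := by
        rw [← spec hB, resBsI hB s hs]
    _ = _ := conj_mul hB _ _

lemma sum_RB {B : Mat3} (hB : B.PosDef) (s : ℝ) (hs : 0 ≤ s) :
    ∑ k, ∑ l, res B s k l * B k l = ∑ a, (lam hB a + s)⁻¹ * lam hB a := by
  have h2 : (res B s * B).trace = ∑ a, (lam hB a + s)⁻¹ * lam hB a := by
    rw [resB hB s hs, Matrix.trace_mul_cycle, U_star_mul hB, Matrix.one_mul,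
      Matrix.trace_diagonal]
  have h3 : (res B s * B).trace = ∑ k, ∑ l, res B s k l * B l k := by
    simp [Matrix.trace, Matrix.diag, Matrix.mul_apply]
  rw [← h2, h3]
  exact Finset.sum_congr rfl fun k _ => Finset.sum_congr rfl fun l _ => by rw [Bsymm hB l k]

lemma sum_RBR {B : Mat3} (hB : B.PosDef) (s : ℝ) (hs : 0 ≤ s) (i j : Fin 3) :
    ∑ k, ∑ l, res B s i k * B k l * res B s j l
      = ∑ a, U hB i a * ((lam hB a + s)⁻¹ * lam hB a * (lam hB a + s)⁻¹) * U hB j a := by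
  have hRBR : res B s * B * res B s
      = U hB * Matrix.diagonal
          (fun a => (lam hB a + s)⁻¹ * lam hB a * (lam hB a + s)⁻¹) * star (U hB) := by
    rw [resB hB s hs, resBsI hB s hs, conj_mul hB]
  have h1 : (res B s * B * res B s) i j
      = ∑ a, U hB i a * ((lam hB a + s)⁻¹ * lam hB a * (lam hB a + s)⁻¹) * U hB j a := by
    rw [hRBR, entry hB]
  rw [← h1]
  have expand : (res B s * B * res B s) i j
      = ∑ l, ∑ k, res B s i k * B k l * res B s l j := by
    rw [Matrix.mul_apply]
    refine Finset.sum_congr rfl fun l _ => ?_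
    rw [Matrix.mul_apply, Finset.sum_mul]
  rw [expand, Finset.sum_comm]
  exact Finset.sum_congr rfl fun k _ => Finset.sum_congr rfl fun l _ => by
    rw [res_symm hB s hs j k]

lemma U_entry_le {B : Mat3} (hB : B.PosDef) (p a : Fin 3) : |U hB p a| ≤ 1 := by
  have h := congrFun (congrFun (U_mul_star hB) p) p
  simp only [Matrix.mul_apply, Matrix.star_apply, star_trivial, Matrix.one_apply_eq] at h
  have h1 : U hB p a * U hB p a ≤ 1 := by
    rw [← h]
    exact Finset.single_le_sum (f := fun b => U hB p b * U hB p b)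
      (fun b _ => mul_self_nonneg _) (Finset.mem_univ a)
  exact abs_le_one_iff_mul_self_le_one.2 h1

/-- Entries of the resolvent, in explicit spectral form. -/
noncomputable def Eexp {B : Mat3} (hB : B.PosDef) (p q : Fin 3) (s : ℝ) : ℝ :=
  ∑ a, U hB p a * (lam hB a + s)⁻¹ * U hB q a

lemma Eexp_cont {B : Mat3} (hB : B.PosDef) (p q : Fin 3) :
    ContinuousOn (Eexp hB p q) (Set.Ici 0) := by
  apply continuousOn_finset_sum
  intro a _
  exact (continuousOn_const.mul (contin_inv (lam_pos hB a))).mul continuousOn_const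

lemma Eexp_bound {B : Mat3} (hB : B.PosDef) (p q : Fin 3) {s : ℝ} (hs : 1 ≤ s) :
    |Eexp hB p q s| ≤ 3 * s⁻¹ := by
  have hs0 : (0:ℝ) < s := lt_of_lt_of_le one_pos hs
  have hterm : ∀ a : Fin 3, |U hB p a * (lam hB a + s)⁻¹ * U hB q a| ≤ s⁻¹ := by
    intro a
    have hmu0 : (0:ℝ) < (lam hB a + s) := by have := lam_pos hB a; linarith
    have hmu : (lam hB a + s)⁻¹ ≤ s⁻¹ := by
      rw [← one_div, ← one_div]
      exact one_div_le_one_div_of_le hs0 (by have := lam_pos hB a; linarith)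
    rw [abs_mul, abs_mul, abs_of_pos (inv_pos.2 hmu0)]
    calc |U hB p a| * (lam hB a + s)⁻¹ * |U hB q a|
        ≤ 1 * (lam hB a + s)⁻¹ * 1 := by
          apply mul_le_mul (mul_le_mul (U_entry_le hB p a) le_rfl (by positivity)
            (by norm_num)) (U_entry_le hB q a) (abs_nonneg _) (by positivity)
      _ = (lam hB a + s)⁻¹ := by ring
      _ ≤ s⁻¹ := hmu
  calc |Eexp hB p q s| ≤ ∑ a : Fin 3, |U hB p a * (lam hB a + s)⁻¹ * U hB q a| :=
        Finset.abs_sum_le_sum_abs _ _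
    _ ≤ ∑ _a : Fin 3, s⁻¹ := Finset.sum_le_sum fun a _ => hterm a
    _ = 3 * s⁻¹ := by
        simp [Finset.sum_const]

lemma fkl_int {B : Mat3} (hB : B.PosDef) (i j k l : Fin 3) :
    IntegrableOn (fun s => symmetrize (otimes (res B s) (res B s)) i j k l
      / Real.sqrt ((B + s • (1 : Mat3)).det)) (Set.Ioi (0:ℝ)) := by
  have hl := lam_pos hB
  have hFexp : IntegrableOn (fun s =>
      (Eexp hB i j s * Eexp hB k l s + Eexp hB i k s * Eexp hB j l s
        + Eexp hB i l s * Eexp hB j k s) / 3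
      / Real.sqrt ((lam hB 0 + s) * (lam hB 1 + s) * (lam hB 2 + s))) (Set.Ioi (0:ℝ)) := by
    apply integrableOn_of_bound _ ?_ 9
    · intro s hs
      have hs0 : (0:ℝ) < s := lt_of_lt_of_le one_pos hs
      have hsi : s⁻¹ ≤ 1 := by
        rw [← one_div]; exact (div_le_one hs0).2 hs
      have hE3 : ∀ p q : Fin 3, |Eexp hB p q s| ≤ 3 := fun p q =>
        le_trans (Eexp_bound hB p q hs) (by nlinarith)
      have hA : |Eexp hB i j s * Eexp hB k l s + Eexp hB i k s * Eexp hB j l s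
          + Eexp hB i l s * Eexp hB j k s| ≤ 27 * s⁻¹ := by
        have t1 : |Eexp hB i j s * Eexp hB k l s| ≤ 3 * s⁻¹ * 3 := by
          rw [abs_mul]
          exact mul_le_mul (Eexp_bound hB i j hs) (hE3 k l) (abs_nonneg _) (by positivity)
        have t2 : |Eexp hB i k s * Eexp hB j l s| ≤ 3 * s⁻¹ * 3 := by
          rw [abs_mul]
          exact mul_le_mul (Eexp_bound hB i k hs) (hE3 j l) (abs_nonneg _) (by positivity)
        have t3 : |Eexp hB i l s * Eexp hB j k s| ≤ 3 * s⁻¹ * 3 := by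
          rw [abs_mul]
          exact mul_le_mul (Eexp_bound hB i l hs) (hE3 j k) (abs_nonneg _) (by positivity)
        have u1 : |Eexp hB i j s * Eexp hB k l s + Eexp hB i k s * Eexp hB j l s
            + Eexp hB i l s * Eexp hB j k s|
            ≤ |Eexp hB i j s * Eexp hB k l s + Eexp hB i k s * Eexp hB j l s|
              + |Eexp hB i l s * Eexp hB j k s| := abs_add_le _ _
        have u2 : |Eexp hB i j s * Eexp hB k l s + Eexp hB i k s * Eexp hB j l s|
            ≤ |Eexp hB i j s * Eexp hB k l s| + |Eexp hB i k s * Eexp hB j l s| := abs_add_le _ _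
        linarith
      have hsub : s ^ ((3:ℝ)/2)
          ≤ Real.sqrt ((lam hB 0 + s) * (lam hB 1 + s) * (lam hB 2 + s)) :=
        sqrt_ge (hl 0) (hl 1) (hl 2) hs
      have hsp : (0:ℝ) < s ^ ((3:ℝ)/2) := Real.rpow_pos_of_pos hs0 _
      have hupos : (0:ℝ) < Real.sqrt ((lam hB 0 + s) * (lam hB 1 + s) * (lam hB 2 + s)) :=
        lt_of_lt_of_le hsp hsub
      have h3abs : |(3:ℝ)| = 3 := by norm_num
      rw [abs_div, abs_div, abs_of_pos hupos, h3abs]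
      have step1 : |Eexp hB i j s * Eexp hB k l s + Eexp hB i k s * Eexp hB j l s
            + Eexp hB i l s * Eexp hB j k s| / 3
            / Real.sqrt ((lam hB 0 + s) * (lam hB 1 + s) * (lam hB 2 + s))
          ≤ (27 * s⁻¹) / 3 / s ^ ((3:ℝ)/2) := by
        exact div_le_div₀ (by positivity) (by linarith [hA]) hsp hsub
      refine le_trans step1 (le_of_eq ?_)
      rw [rpow_split hs, div_eq_mul_inv, div_eq_mul_inv]
      ring
    · apply ContinuousOn.div
      · apply ContinuousOn.div_const
        exact (((Eexp_cont hB i j).mul (Eexp_cont hB k l)).add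
          ((Eexp_cont hB i k).mul (Eexp_cont hB j l))).add
            ((Eexp_cont hB i l).mul (Eexp_cont hB j k))
      · exact (Real.continuous_sqrt.comp (by fun_prop)).continuousOn
      · intro s hs
        have hs' : (0:ℝ) ≤ s := hs
        have h0 : (0:ℝ) < (lam hB 0 + s) * (lam hB 1 + s) * (lam hB 2 + s) := by
          have := hl 0; have := hl 1; have := hl 2; positivity
        exact (Real.sqrt_pos.2 h0).ne'
  apply hFexp.congr_fun ?_ measurableSet_Ioi
  intro s hs
  have hs' : (0:ℝ) ≤ s := le_of_lt hs
  refine Eq.symm ?_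
  show symmetrize (otimes (res B s) (res B s)) i j k l
      / Real.sqrt ((B + s • (1 : Mat3)).det) = _
  rw [symmetrize_otimes (res B s) (res_symm hB s hs'), detBsI hB s]
  simp only [res_apply hB s hs', Eexp]


lemma sum_third {B : Mat3} (hB : B.PosDef) (s : ℝ) (hs : 0 ≤ s) (i j : Fin 3) :
    ∑ k, ∑ l, res B s i l * res B s j k * B k l
      = ∑ k, ∑ l, res B s i k * B k l * res B s j l := by
  rw [Finset.sum_comm]
  exact Finset.sum_congr rfl fun k _ => Finset.sum_congr rfl fun l _ => by
    rw [Bsymm hB l k]; ring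

set_option maxHeartbeats 2000000 in
lemma pointwise {B : Mat3} (hB : B.PosDef) (i j : Fin 3) {s : ℝ} (hs : 0 < s) :
    ∑ k, ∑ l, symmetrize (otimes (res B s) (res B s)) i j k l
        / Real.sqrt ((B + s • (1 : Mat3)).det) * B k l
      = ∑ a, U hB i a * U hB j a *
          psiF (lam hB a) (lam hB 0) (lam hB 1) (lam hB 2) s := by
  have hl := lam_pos hB
  have hs' : (0:ℝ) ≤ s := le_of_lt hs
  have hne : ∀ a, lam hB a + s ≠ 0 := fun a => by have := hl a; positivity
  have hDpos : (0:ℝ) < (lam hB 0 + s) * (lam hB 1 + s) * (lam hB 2 + s) := by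
    have h0 := hl 0; have h1 := hl 1; have h2 := hl 2
    positivity
  have hu : (0:ℝ) < Real.sqrt ((lam hB 0 + s) * (lam hB 1 + s) * (lam hB 2 + s)) :=
    Real.sqrt_pos.2 hDpos
  simp only [symmetrize_otimes (res B s) (res_symm hB s hs'), detBsI hB s]
  have step : ∀ k l : Fin 3,
      (res B s i j * res B s k l + res B s i k * res B s j l + res B s i l * res B s j k) / 3
          / Real.sqrt ((lam hB 0 + s) * (lam hB 1 + s) * (lam hB 2 + s)) * B k l
        = (res B s i j * (res B s k l * B k l) + res B s i k * B k l * res B s j l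
            + res B s i l * res B s j k * B k l)
          * (3⁻¹ * (Real.sqrt ((lam hB 0 + s) * (lam hB 1 + s) * (lam hB 2 + s)))⁻¹) :=
    fun k l => by ring
  simp only [step]
  simp only [← Finset.sum_mul]
  simp only [Finset.sum_add_distrib]
  simp only [← Finset.mul_sum]
  rw [sum_RB hB s hs', sum_RBR hB s hs', sum_third hB s hs', sum_RBR hB s hs',
    res_apply hB s hs' i j]
  have e1 : ∀ a : Fin 3, (lam hB a + s)⁻¹ * lam hB a = 1 - s * (lam hB a + s)⁻¹ := by
    intro a
    field_simp
    rw [eq_sub_iff_add_eq, ← add_div, div_self (hne a)]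
  simp only [psiF, e1, Fin.sum_univ_three, div_eq_mul_inv]
  ring

end MatrixPart

end CtensAux

theorem Ctens_contract_self (B : Mat3) (hB : B.PosDef) (hdet : B.det = 1) :
    contr (Ctens B) B = (3 / 2 : ℝ) • Amat B := by
  open CtensAux in
  ext i j
  have hl := CtensAux.lam_pos hB
  simp only [contr, Ctens, Amat, Matrix.of_apply, Matrix.smul_apply, smul_eq_mul]
  have hFint : ∀ k l : Fin 3, Integrable (fun s => symmetrize (otimes (res B s) (res B s)) i j k l
      / Real.sqrt ((B + s • (1:Mat3)).det) * B k l) (volume.restrict (Set.Ioi 0)) :=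
    fun k l => (CtensAux.fkl_int hB i j k l).mul_const _
  have step1 : ∀ k l : Fin 3, (3 / 4 * ∫ s in Set.Ioi (0:ℝ),
        symmetrize (otimes (res B s) (res B s)) i j k l
          / Real.sqrt ((B + s • (1:Mat3)).det)) * B k l
      = 3 / 4 * ∫ s in Set.Ioi (0:ℝ), symmetrize (otimes (res B s) (res B s)) i j k l
          / Real.sqrt ((B + s • (1:Mat3)).det) * B k l := by
    intro k l
    rw [MeasureTheory.integral_mul_const]
    ring
  simp only [step1]
  simp only [← Finset.mul_sum]
  have swap : ∑ k, ∑ l, ∫ s in Set.Ioi (0:ℝ),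
        symmetrize (otimes (res B s) (res B s)) i j k l
          / Real.sqrt ((B + s • (1:Mat3)).det) * B k l
      = ∫ s in Set.Ioi (0:ℝ), res B s i j / Real.sqrt ((B + s • (1:Mat3)).det) := by
    calc ∑ k, ∑ l, ∫ s in Set.Ioi (0:ℝ),
          symmetrize (otimes (res B s) (res B s)) i j k l
            / Real.sqrt ((B + s • (1:Mat3)).det) * B k l
        = ∑ k : Fin 3, ∫ s in Set.Ioi (0:ℝ), ∑ l,
            symmetrize (otimes (res B s) (res B s)) i j k l
              / Real.sqrt ((B + s • (1:Mat3)).det) * B k l :=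
          Finset.sum_congr rfl fun k _ =>
            (MeasureTheory.integral_finset_sum _ fun l _ => hFint k l).symm
      _ = ∫ s in Set.Ioi (0:ℝ), ∑ k, ∑ l,
            symmetrize (otimes (res B s) (res B s)) i j k l
              / Real.sqrt ((B + s • (1:Mat3)).det) * B k l :=
          (MeasureTheory.integral_finset_sum _ fun k _ =>
            MeasureTheory.integrable_finset_sum _ fun l _ => hFint k l).symm
      _ = ∫ s in Set.Ioi (0:ℝ), ∑ a, CtensAux.U hB i a * CtensAux.U hB j a *
            CtensAux.psiF (CtensAux.lam hB a) (CtensAux.lam hB 0) (CtensAux.lam hB 1)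
              (CtensAux.lam hB 2) s :=
          MeasureTheory.setIntegral_congr_fun measurableSet_Ioi
            (fun s hs => CtensAux.pointwise hB i j hs)
      _ = ∑ a : Fin 3, ∫ s in Set.Ioi (0:ℝ), CtensAux.U hB i a * CtensAux.U hB j a *
            CtensAux.psiF (CtensAux.lam hB a) (CtensAux.lam hB 0) (CtensAux.lam hB 1)
              (CtensAux.lam hB 2) s :=
          MeasureTheory.integral_finset_sum _ fun a _ =>
            ((CtensAux.psiF_integrable (hl a) (hl 0) (hl 1) (hl 2)).const_mul _)
      _ = ∑ a : Fin 3, ∫ s in Set.Ioi (0:ℝ), CtensAux.U hB i a * CtensAux.U hB j a *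
            CtensAux.baseF (CtensAux.lam hB a) (CtensAux.lam hB 0) (CtensAux.lam hB 1)
              (CtensAux.lam hB 2) s :=
          Finset.sum_congr rfl fun a _ => by
            rw [MeasureTheory.integral_const_mul, MeasureTheory.integral_const_mul,
              CtensAux.scalar_key (hl a) (hl 0) (hl 1) (hl 2)]
      _ = ∫ s in Set.Ioi (0:ℝ), ∑ a, CtensAux.U hB i a * CtensAux.U hB j a *
            CtensAux.baseF (CtensAux.lam hB a) (CtensAux.lam hB 0) (CtensAux.lam hB 1)
              (CtensAux.lam hB 2) s :=
          (MeasureTheory.integral_finset_sum _ fun a _ =>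
            ((CtensAux.baseF_integrable (hl a) (hl 0) (hl 1) (hl 2)).const_mul _)).symm
      _ = ∫ s in Set.Ioi (0:ℝ), res B s i j / Real.sqrt ((B + s • (1:Mat3)).det) := by
          apply MeasureTheory.setIntegral_congr_fun measurableSet_Ioi
          intro s hs
          show ∑ a, CtensAux.U hB i a * CtensAux.U hB j a *
              CtensAux.baseF (CtensAux.lam hB a) (CtensAux.lam hB 0) (CtensAux.lam hB 1)
                (CtensAux.lam hB 2) s
            = res B s i j / Real.sqrt ((B + s • (1:Mat3)).det)
          rw [CtensAux.res_apply hB s (le_of_lt hs) i j, CtensAux.detBsI hB s,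
            Finset.sum_div]
          exact Finset.sum_congr rfl fun a _ => by
            simp only [CtensAux.baseF]
            ring
  rw [swap]
  ring
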